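/- (Lemma 3.) The single-obstacle combined feedback μ is continuous on ℝ^p \ {q} and locally Lipschitz continuous on ℝ^p \ ({q} ∪ {0}). -/

import Mathlib

open scoped RealInnerProductSpace
open Classical

section LipAtToolkit

variable {E F G H : Type*} [NormedAddCommGroup E] [NormedAddCommGroup F]
  [NormedAddCommGroup G] [NormedAddCommGroup H]

/-- `f` is Lipschitz on some neighborhood of `x`. -/
def LipAt (f : E → F) (x : E) : Prop :=
  ∃ K : NNReal, ∃ t ∈ nhds x, LipschitzOnWith K f t

lemma LipschitzWith.lipAt {K : NNReal} {f : E → F} (h : LipschitzWith K f) (x : E) :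
    LipAt f x :=
  ⟨K, Set.univ, Filter.univ_mem, h.lipschitzOnWith⟩

lemma lipAt_const (b : F) (x : E) : LipAt (fun _ => b) x :=
  (LipschitzWith.const b).lipAt x

lemma lipAt_id (x : E) : LipAt (fun y => y) x := LipschitzWith.id.lipAt x

lemma LipAt.continuousAt {f : E → F} {x : E} (h : LipAt f x) : ContinuousAt f x := by
  obtain ⟨K, t, ht, hf⟩ := h
  exact hf.continuousOn.continuousAt ht

lemma LipAt.congr_nhds {f g : E → F} {x : E} (h : LipAt f x)
    (hfg : ∀ᶠ y in nhds x, f y = g y) : LipAt g x := by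
  obtain ⟨K, t, ht, hf⟩ := h
  refine ⟨K, t ∩ {y | f y = g y}, Filter.inter_mem ht hfg, ?_⟩
  intro a ha b hb
  have h1 : f a = g a := ha.2
  have h2 : f b = g b := hb.2
  rw [← h1, ← h2]
  exact hf ha.1 hb.1

lemma ContDiffAt.lipAt [NormedSpace ℝ E] [NormedSpace ℝ F] {f : E → F} {x : E}
    (h : ContDiffAt ℝ 1 f x) : LipAt f x := h.exists_lipschitzOnWith

lemma LipAt.compLip {g : F → G} {Kg : NNReal} (hg : LipschitzWith Kg g) {f : E → F} {x : E}
    (hf : LipAt f x) : LipAt (fun y => g (f y)) x := by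
  obtain ⟨K, t, ht, h⟩ := hf
  exact ⟨Kg * K, t, ht, hg.comp_lipschitzOnWith h⟩

lemma LipAt.add {f g : E → F} {x : E} (hf : LipAt f x) (hg : LipAt g x) :
    LipAt (fun y => f y + g y) x := by
  obtain ⟨K1, t1, ht1, h1⟩ := hf
  obtain ⟨K2, t2, ht2, h2⟩ := hg
  exact ⟨K1 + K2, t1 ∩ t2, Filter.inter_mem ht1 ht2,
    (h1.mono Set.inter_subset_left).add (h2.mono Set.inter_subset_right)⟩

lemma LipAt.sub {f g : E → F} {x : E} (hf : LipAt f x) (hg : LipAt g x) :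
    LipAt (fun y => f y - g y) x := by
  obtain ⟨K1, t1, ht1, h1⟩ := hf
  obtain ⟨K2, t2, ht2, h2⟩ := hg
  exact ⟨K1 + K2, t1 ∩ t2, Filter.inter_mem ht1 ht2,
    (h1.mono Set.inter_subset_left).sub (h2.mono Set.inter_subset_right)⟩

lemma LipAt.neg {f : E → F} {x : E} (hf : LipAt f x) : LipAt (fun y => -f y) x := by
  simpa only [zero_sub] using (lipAt_const (0 : F) x).sub hf

lemma LipAt.max {f g : E → ℝ} {x : E} (hf : LipAt f x) (hg : LipAt g x) :
    LipAt (fun y => max (f y) (g y)) x := by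
  obtain ⟨K1, t1, ht1, h1⟩ := hf
  obtain ⟨K2, t2, ht2, h2⟩ := hg
  refine ⟨K1 ⊔ K2, t1 ∩ t2, Filter.inter_mem ht1 ht2,
    LipschitzOnWith.of_dist_le_mul fun a ha b hb => ?_⟩
  have e1 := (h1.mono Set.inter_subset_left).dist_le_mul a ha b hb
  have e2 := (h2.mono Set.inter_subset_right).dist_le_mul a ha b hb
  have c1 : (K1 : ℝ) ≤ ((K1 ⊔ K2 : NNReal) : ℝ) := by exact_mod_cast le_sup_left
  have c2 : (K2 : ℝ) ≤ ((K1 ⊔ K2 : NNReal) : ℝ) := by exact_mod_cast le_sup_right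
  rw [Real.dist_eq]
  refine (abs_max_sub_max_le_max _ _ _ _).trans (max_le ?_ ?_)
  · calc |f a - f b| = dist (f a) (f b) := (Real.dist_eq _ _).symm
      _ ≤ K1 * dist a b := e1
      _ ≤ ((K1 ⊔ K2 : NNReal) : ℝ) * dist a b := by gcongr
  · calc |g a - g b| = dist (g a) (g b) := (Real.dist_eq _ _).symm
      _ ≤ K2 * dist a b := e2
      _ ≤ ((K1 ⊔ K2 : NNReal) : ℝ) * dist a b := by gcongr

lemma LipAt.min {f g : E → ℝ} {x : E} (hf : LipAt f x) (hg : LipAt g x) :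
    LipAt (fun y => min (f y) (g y)) x := by
  have := (hf.neg.max hg.neg).neg
  simpa only [max_neg_neg, neg_neg] using this

lemma LipAt.bilin [NormedSpace ℝ F] [NormedSpace ℝ G] [NormedSpace ℝ H]
    (B : F →L[ℝ] G →L[ℝ] H) {f : E → F} {g : E → G} {x : E}
    (hf : LipAt f x) (hg : LipAt g x) : LipAt (fun y => B (f y) (g y)) x := by
  obtain ⟨K1, t1, ht1, h1⟩ := hf
  obtain ⟨K2, t2, ht2, h2⟩ := hg
  obtain ⟨r, hr0, hball⟩ := Metric.mem_nhds_iff.mp (Filter.inter_mem ht1 ht2)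
  have hx1 : x ∈ t1 := mem_of_mem_nhds ht1
  have hx2 : x ∈ t2 := mem_of_mem_nhds ht2
  set M1 : ℝ := ‖f x‖ + K1 * r with hM1
  set M2 : ℝ := ‖g x‖ + K2 * r with hM2
  have hM1nn : 0 ≤ M1 := by positivity
  have hM2nn : 0 ≤ M2 := by positivity
  refine ⟨Real.toNNReal (‖B‖ * (M1 * K2 + M2 * K1)),
    Metric.ball x r ∩ (t1 ∩ t2),
    Filter.inter_mem (Metric.ball_mem_nhds x hr0) (Filter.inter_mem ht1 ht2),
    LipschitzOnWith.of_dist_le_mul fun a ha b hb => ?_⟩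
  have hfa : ‖f a‖ ≤ M1 := by
    have hd : dist (f a) (f x) ≤ K1 * dist a x := h1.dist_le_mul a ha.2.1 x hx1
    have hdr : dist a x ≤ r := le_of_lt (Metric.mem_ball.mp ha.1)
    calc ‖f a‖ = ‖f x + (f a - f x)‖ := by rw [add_sub_cancel]
      _ ≤ ‖f x‖ + ‖f a - f x‖ := norm_add_le _ _
      _ = ‖f x‖ + dist (f a) (f x) := by rw [dist_eq_norm]
      _ ≤ ‖f x‖ + K1 * r := by
          refine add_le_add le_rfl (hd.trans ?_)
          exact mul_le_mul_of_nonneg_left hdr (K1.coe_nonneg)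
  have hgb : ‖g b‖ ≤ M2 := by
    have hd : dist (g b) (g x) ≤ K2 * dist b x := h2.dist_le_mul b hb.2.2 x hx2
    have hdr : dist b x ≤ r := le_of_lt (Metric.mem_ball.mp hb.1)
    calc ‖g b‖ = ‖g x + (g b - g x)‖ := by rw [add_sub_cancel]
      _ ≤ ‖g x‖ + ‖g b - g x‖ := norm_add_le _ _
      _ = ‖g x‖ + dist (g b) (g x) := by rw [dist_eq_norm]
      _ ≤ ‖g x‖ + K2 * r := by
          refine add_le_add le_rfl (hd.trans ?_)
          exact mul_le_mul_of_nonneg_left hdr (K2.coe_nonneg)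
  have hKnn : 0 ≤ ‖B‖ * (M1 * K2 + M2 * K1) := by positivity
  rw [Real.coe_toNNReal _ hKnn]
  have hsplit : B (f a) (g a) - B (f b) (g b)
      = B (f a) (g a - g b) + B (f a - f b) (g b) := by
    simp only [map_sub, ContinuousLinearMap.sub_apply]
    abel
  have hga : dist (g a) (g b) ≤ K2 * dist a b :=
    h2.dist_le_mul a ha.2.2 b hb.2.2
  have hfab : dist (f a) (f b) ≤ K1 * dist a b :=
    h1.dist_le_mul a ha.2.1 b hb.2.1
  calc dist (B (f a) (g a)) (B (f b) (g b))
      = ‖B (f a) (g a - g b) + B (f a - f b) (g b)‖ := by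
        rw [dist_eq_norm, hsplit]
    _ ≤ ‖B (f a) (g a - g b)‖ + ‖B (f a - f b) (g b)‖ := norm_add_le _ _
    _ ≤ ‖B‖ * ‖f a‖ * ‖g a - g b‖ + ‖B‖ * ‖f a - f b‖ * ‖g b‖ :=
        add_le_add (B.le_opNorm₂ _ _) (B.le_opNorm₂ _ _)
    _ ≤ ‖B‖ * M1 * (K2 * dist a b) + ‖B‖ * (K1 * dist a b) * M2 := by
        have e1 : ‖g a - g b‖ ≤ K2 * dist a b := by rw [← dist_eq_norm]; exact hga
        have e2 : ‖f a - f b‖ ≤ K1 * dist a b := by rw [← dist_eq_norm]; exact hfab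
        have := norm_nonneg (B : F →L[ℝ] G →L[ℝ] H)
        gcongr
    _ = ‖B‖ * (M1 * K2 + M2 * K1) * dist a b := by ring

lemma LipAt.mul {f g : E → ℝ} {x : E} (hf : LipAt f x) (hg : LipAt g x) :
    LipAt (fun y => f y * g y) x :=
  LipAt.bilin (ContinuousLinearMap.mul ℝ ℝ) hf hg

lemma LipAt.smul [NormedSpace ℝ F] {f : E → ℝ} {g : E → F} {x : E}
    (hf : LipAt f x) (hg : LipAt g x) : LipAt (fun y => f y • g y) x :=
  LipAt.bilin (ContinuousLinearMap.lsmul ℝ ℝ) hf hg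

lemma LipAt.inv {f : E → ℝ} {x : E} (hf : LipAt f x) (h0 : f x ≠ 0) :
    LipAt (fun y => (f y)⁻¹) x := by
  obtain ⟨K, t, ht, h⟩ := hf
  have hc : ContinuousAt f x := LipAt.continuousAt ⟨K, t, ht, h⟩
  set m : ℝ := |f x| / 2 with hm
  have hmpos : 0 < m := by
    have : 0 < |f x| := abs_pos.mpr h0
    positivity
  have hev : ∀ᶠ y in nhds x, m < |f y| := by
    have habs : ContinuousAt (fun y => |f y|) x := hc.abs
    have : m < |f x| := by
      rw [hm]; linarith [abs_pos.mpr h0]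
    exact habs.eventually (eventually_gt_nhds this)
  refine ⟨Real.toNNReal ((K : ℝ) / m ^ 2), t ∩ {y | m < |f y|},
    Filter.inter_mem ht hev, LipschitzOnWith.of_dist_le_mul fun a ha b hb => ?_⟩
  have ha' : m < |f a| := ha.2
  have hb' : m < |f b| := hb.2
  have hfa : f a ≠ 0 := by
    intro hz; rw [hz] at ha'; simp at ha'; linarith
  have hfb : f b ≠ 0 := by
    intro hz; rw [hz] at hb'; simp at hb'; linarith
  have key : dist (f a)⁻¹ (f b)⁻¹ = dist (f a) (f b) / (|f a| * |f b|) := by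
    rw [Real.dist_eq, Real.dist_eq]
    rw [show (f a)⁻¹ - (f b)⁻¹ = (f b - f a) / (f a * f b) by field_simp]
    rw [abs_div, abs_mul, abs_sub_comm]
  have hKnn : 0 ≤ (K : ℝ) / m ^ 2 := by positivity
  rw [Real.coe_toNNReal _ hKnn, key]
  have hd : dist (f a) (f b) ≤ K * dist a b := h.dist_le_mul a ha.1 b hb.1
  calc dist (f a) (f b) / (|f a| * |f b|)
      ≤ (K * dist a b) / (m * m) := by
        have hmm : m * m ≤ |f a| * |f b| :=
          mul_le_mul (le_of_lt ha') (le_of_lt hb') (le_of_lt hmpos) (abs_nonneg _)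
        exact div_le_div₀ (by positivity) hd (by positivity) hmm
    _ = (K : ℝ) / m ^ 2 * dist a b := by rw [pow_two]; ring

end LipAtToolkit

noncomputable def sc (c r : ℝ) : ℝ :=
  if r ≤ c then c ^ ((2:ℝ)/3) * r ^ ((1:ℝ)/3) else r

noncomputable def nuS (c : ℝ) {p : ℕ} (ξ : EuclideanSpace ℝ (Fin p)) :
    EuclideanSpace ℝ (Fin p) :=
  if ξ = 0 then 0 else (-(sc c ‖ξ‖)⁻¹) • ξ

noncomputable def proj {p : ℕ} (z v : EuclideanSpace ℝ (Fin p)) :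
    EuclideanSpace ℝ (Fin p) :=
  v - (⟪z, v⟫ / ‖z‖ ^ 2) • z

noncomputable def nuA (c : ℝ) {p : ℕ} (q ξ : EuclideanSpace ℝ (Fin p)) :
    EuclideanSpace ℝ (Fin p) :=
  proj (ξ - q) (nuS c ξ)

noncomputable def sigmaQ {p : ℕ} (q ξ : EuclideanSpace ℝ (Fin p)) : ℝ :=
  max 0 (min (⟪ξ, ξ - q⟫ + 1) 1)

noncomputable def alphaS {p : ℕ} (q : EuclideanSpace ℝ (Fin p)) (Δ lam : ℝ)
    (ξ : EuclideanSpace ℝ (Fin p)) : ℝ :=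
  max 0 (min ((‖ξ - q‖ - Δ * sigmaQ q ξ) / (lam - Δ)) 1)

noncomputable def alphaA {p : ℕ} (q : EuclideanSpace ℝ (Fin p)) (Δ lam : ℝ)
    (ξ : EuclideanSpace ℝ (Fin p)) : ℝ :=
  sigmaQ q ξ * (1 - alphaS q Δ lam ξ)

noncomputable def mu (c : ℝ) {p : ℕ} (q : EuclideanSpace ℝ (Fin p)) (Δ lam : ℝ)
    (ξ : EuclideanSpace ℝ (Fin p)) : EuclideanSpace ℝ (Fin p) :=
  alphaS q Δ lam ξ • nuS c ξ + alphaA q Δ lam ξ • nuA c q ξ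

section Application

lemma sc_eq_max {c : ℝ} (hc : 0 < c) {r : ℝ} (hr : 0 ≤ r) :
    sc c r = max r (c ^ ((2:ℝ)/3) * r ^ ((1:ℝ)/3)) := by
  unfold sc
  split_ifs with h
  · refine (max_eq_right ?_).symm
    calc r = r ^ ((2:ℝ)/3) * r ^ ((1:ℝ)/3) := by
          rw [← Real.rpow_add' hr (by norm_num)]
          rw [show (2:ℝ)/3 + 1/3 = 1 by norm_num, Real.rpow_one]
      _ ≤ c ^ ((2:ℝ)/3) * r ^ ((1:ℝ)/3) := by
          exact mul_le_mul_of_nonneg_right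
            (Real.rpow_le_rpow hr h (by norm_num)) (Real.rpow_nonneg hr _)
  · refine (max_eq_left ?_).symm
    push_neg at h
    have hr0 : (0:ℝ) < r := lt_trans hc h
    calc c ^ ((2:ℝ)/3) * r ^ ((1:ℝ)/3)
        ≤ r ^ ((2:ℝ)/3) * r ^ ((1:ℝ)/3) :=
          mul_le_mul_of_nonneg_right
            (Real.rpow_le_rpow (le_of_lt hc) (le_of_lt h) (by norm_num))
            (Real.rpow_nonneg hr _)
      _ = r := by
          rw [← Real.rpow_add' hr (by norm_num)]
          rw [show (2:ℝ)/3 + 1/3 = 1 by norm_num, Real.rpow_one]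

lemma sc_ge {c r : ℝ} (hc : 0 < c) (hr : 0 ≤ r) : r ≤ sc c r := by
  rw [sc_eq_max hc hr]; exact le_max_left _ _

variable {p : ℕ}

local notation "E" => EuclideanSpace ℝ (Fin p)

lemma lipAt_scnorm {c : ℝ} (hc : 0 < c) {x : E} (hx : x ≠ 0) :
    LipAt (fun ξ : E => sc c ‖ξ‖) x := by
  have h1 : LipAt (fun ξ : E => ‖ξ‖) x := lipschitzWith_one_norm.lipAt x
  have h2 : LipAt (fun ξ : E => c ^ ((2:ℝ)/3) * ‖ξ‖ ^ ((1:ℝ)/3)) x := by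
    have hn : ContDiffAt ℝ 1 (fun ξ : E => ‖ξ‖) x := contDiffAt_norm ℝ hx
    have hrp : ContDiffAt ℝ 1 (fun ξ : E => ‖ξ‖ ^ ((1:ℝ)/3)) x :=
      hn.rpow_const_of_ne (norm_ne_zero_iff.mpr hx)
    exact (contDiffAt_const.mul hrp).lipAt
  refine (h1.max h2).congr_nhds (Filter.Eventually.of_forall fun ξ => ?_)
  exact (sc_eq_max hc (norm_nonneg ξ)).symm

lemma lipAt_nuS {c : ℝ} (hc : 0 < c) {x : E} (hx : x ≠ 0) :
    LipAt (fun ξ : E => nuS c ξ) x := by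
  have hsc := lipAt_scnorm hc hx
  have hscx : sc c ‖x‖ ≠ 0 :=
    ne_of_gt (lt_of_lt_of_le (norm_pos_iff.mpr hx) (sc_ge hc (norm_nonneg x)))
  have hinv := (hsc.inv hscx).neg
  have hsm := hinv.smul (lipAt_id x)
  refine hsm.congr_nhds ?_
  have hne : ∀ᶠ ξ : E in nhds x, ξ ≠ 0 := eventually_ne_nhds hx
  filter_upwards [hne] with ξ hξ
  rw [nuS, if_neg hξ]

lemma lipAt_sigmaQ (q : E) (x : E) : LipAt (fun ξ : E => sigmaQ q ξ) x := by
  have hinner : LipAt (fun ξ : E => ⟪ξ, ξ - q⟫) x := by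
    have h : ContDiff ℝ 1 fun ξ : E => ⟪ξ, ξ - q⟫ :=
      contDiff_id.inner ℝ (contDiff_id.sub contDiff_const)
    exact h.contDiffAt.lipAt
  show LipAt (fun ξ : E => max 0 (min (⟪ξ, ξ - q⟫ + 1) 1)) x
  exact (lipAt_const 0 x).max ((hinner.add (lipAt_const 1 x)).min (lipAt_const 1 x))

lemma lipAt_alphaS (q : E) (Δ lam : ℝ) (x : E) :
    LipAt (fun ξ : E => alphaS q Δ lam ξ) x := by
  have hn : LipAt (fun ξ : E => ‖ξ - q‖) x :=
    (lipschitzWith_one_norm.comp (LipschitzWith.id.sub (LipschitzWith.const q))).lipAt x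
  have hs := lipAt_sigmaQ q x
  have hmul : LipAt (fun ξ : E => Δ * sigmaQ q ξ) x := (lipAt_const Δ x).mul hs
  have hdiff := hn.sub hmul
  have hdiv : LipAt (fun ξ : E => (‖ξ - q‖ - Δ * sigmaQ q ξ) / (lam - Δ)) x := by
    have h := hdiff.mul (lipAt_const (lam - Δ)⁻¹ x)
    simpa only [div_eq_mul_inv] using h
  show LipAt (fun ξ : E => max 0 (min ((‖ξ - q‖ - Δ * sigmaQ q ξ) / (lam - Δ)) 1)) x
  exact (lipAt_const 0 x).max (hdiv.min (lipAt_const 1 x))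

lemma lipAt_alphaA (q : E) (Δ lam : ℝ) (x : E) :
    LipAt (fun ξ : E => alphaA q Δ lam ξ) x := by
  show LipAt (fun ξ : E => sigmaQ q ξ * (1 - alphaS q Δ lam ξ)) x
  exact (lipAt_sigmaQ q x).mul ((lipAt_const 1 x).sub (lipAt_alphaS q Δ lam x))

lemma lipAt_nuA {c : ℝ} (hc : 0 < c) {q x : E} (hx0 : x ≠ 0) (hxq : x ≠ q) :
    LipAt (fun ξ : E => nuA c q ξ) x := by
  have hnus := lipAt_nuS hc hx0
  have hsub : LipAt (fun ξ : E => ξ - q) x :=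
    (LipschitzWith.id.sub (LipschitzWith.const q)).lipAt x
  have hinner : LipAt (fun ξ : E => ⟪ξ - q, nuS c ξ⟫) x :=
    LipAt.bilin (innerSL ℝ) hsub hnus
  have hnsq : LipAt (fun ξ : E => ‖ξ - q‖ ^ 2) x := by
    have h : ContDiff ℝ 1 fun ξ : E => ⟪ξ - q, ξ - q⟫ :=
      (contDiff_id.sub contDiff_const).inner ℝ (contDiff_id.sub contDiff_const)
    refine h.contDiffAt.lipAt.congr_nhds (Filter.Eventually.of_forall fun ξ => ?_)
    exact real_inner_self_eq_norm_sq _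
  have hx2 : ‖x - q‖ ^ 2 ≠ 0 :=
    pow_ne_zero _ (norm_ne_zero_iff.mpr (sub_ne_zero.mpr hxq))
  have hinv := hnsq.inv hx2
  have hscal : LipAt (fun ξ : E => ⟪ξ - q, nuS c ξ⟫ / ‖ξ - q‖ ^ 2) x := by
    simpa only [div_eq_mul_inv] using hinner.mul hinv
  have h := hnus.sub (hscal.smul hsub)
  exact h

lemma lipAt_mu {c : ℝ} (hc : 0 < c) (q : E) (Δ lam : ℝ) {x : E}
    (hxq : x ≠ q) (hx0 : x ≠ 0) : LipAt (fun ξ : E => mu c q Δ lam ξ) x := by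
  show LipAt (fun ξ : E => alphaS q Δ lam ξ • nuS c ξ + alphaA q Δ lam ξ • nuA c q ξ) x
  exact ((lipAt_alphaS q Δ lam x).smul (lipAt_nuS hc hx0)).add
    ((lipAt_alphaA q Δ lam x).smul (lipAt_nuA hc hx0 hxq))

lemma continuousAt_nuS_zero {c : ℝ} (hc : 0 < c) :
    ContinuousAt (fun ξ : E => nuS c ξ) 0 := by
  have h0 : nuS c (0 : E) = 0 := if_pos rfl
  have ht : Filter.Tendsto (fun ξ : E => nuS c ξ) (nhds 0) (nhds 0) := by
    apply squeeze_zero_norm' (a := fun ξ : E => ‖ξ‖ ^ ((2:ℝ)/3) / c ^ ((2:ℝ)/3))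
    · have hball : ∀ᶠ ξ : E in nhds 0, ‖ξ‖ < c := by
        filter_upwards [Metric.ball_mem_nhds (0:E) hc] with ξ hξ
        simpa [mem_ball_zero_iff] using hξ
      filter_upwards [hball] with ξ hξ
      by_cases hz : ξ = 0
      · have hz0 : nuS c ξ = 0 := by rw [hz]; exact if_pos rfl
        rw [hz0, norm_zero]
        positivity
      · rw [nuS, if_neg hz, norm_smul, Real.norm_eq_abs, abs_neg, abs_inv]
        have hnpos : 0 < ‖ξ‖ := norm_pos_iff.mpr hz
        have hscpos : 0 < sc c ‖ξ‖ := lt_of_lt_of_le hnpos (sc_ge hc (norm_nonneg ξ))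
        rw [abs_of_pos hscpos]
        have hsc : sc c ‖ξ‖ = c ^ ((2:ℝ)/3) * ‖ξ‖ ^ ((1:ℝ)/3) := by
          rw [sc, if_pos (le_of_lt hξ)]
        rw [hsc]
        have hc23 : (0:ℝ) < c ^ ((2:ℝ)/3) := Real.rpow_pos_of_pos hc _
        have h13 : (0:ℝ) < ‖ξ‖ ^ ((1:ℝ)/3) := Real.rpow_pos_of_pos hnpos _
        have key : ‖ξ‖ ^ ((2:ℝ)/3) * ‖ξ‖ ^ ((1:ℝ)/3) = ‖ξ‖ := by
          rw [← Real.rpow_add' (norm_nonneg ξ) (by norm_num)]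
          rw [show (2:ℝ)/3 + 1/3 = 1 by norm_num, Real.rpow_one]
        have heq : (c ^ ((2:ℝ)/3) * ‖ξ‖ ^ ((1:ℝ)/3))⁻¹ * ‖ξ‖
            = ‖ξ‖ ^ ((2:ℝ)/3) / c ^ ((2:ℝ)/3) := by
          set N2 := ‖ξ‖ ^ ((2:ℝ)/3) with hN2
          set N1 := ‖ξ‖ ^ ((1:ℝ)/3) with hN1
          rw [← key]
          have hN1ne : N1 ≠ 0 := ne_of_gt h13
          have hc23ne : c ^ ((2:ℝ)/3) ≠ 0 := ne_of_gt hc23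
          field_simp
        exact le_of_eq heq
    · have hcont : ContinuousAt (fun ξ : E => ‖ξ‖ ^ ((2:ℝ)/3) / c ^ ((2:ℝ)/3)) 0 := by
        apply ContinuousAt.div_const
        exact (Real.continuousAt_rpow_const _ _ (Or.inr (by norm_num))).comp
          continuous_norm.continuousAt
      have h := hcont.tendsto
      simpa [Real.zero_rpow (by norm_num : ((2:ℝ)/3) ≠ 0)] using h
  show Filter.Tendsto (fun ξ : E => nuS c ξ) (nhds 0) (nhds (nuS c (0:E)))
  rw [h0]; exact ht

theorem stmt4 (p : ℕ) (hp : 1 ≤ p) (c : ℝ) (hc : 0 < c)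
    (q : EuclideanSpace ℝ (Fin p)) (Δ lam : ℝ) (hΔ : 0 < Δ) (hlam : Δ < lam) :
    ContinuousOn (fun ξ => mu c q Δ lam ξ) ({q}ᶜ : Set (EuclideanSpace ℝ (Fin p))) ∧
    (∀ ξ : EuclideanSpace ℝ (Fin p), ξ ≠ q → ξ ≠ 0 →
      ∃ K : NNReal, ∃ t ∈ nhds ξ, LipschitzOnWith K (fun ξ' => mu c q Δ lam ξ') t) := by
  constructor
  · intro x hx
    have hxq : x ≠ q := hx
    by_cases hx0 : x = 0
    · subst hx0
      have hq0 : q ≠ 0 := fun h => hxq h.symm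
      have hsigma : Continuous (fun ξ : EuclideanSpace ℝ (Fin p) => sigmaQ q ξ) := by
        have h : Continuous fun ξ : EuclideanSpace ℝ (Fin p) => ⟪ξ, ξ - q⟫ :=
          continuous_id.inner (continuous_id.sub continuous_const)
        exact continuous_const.max ((h.add continuous_const).min continuous_const)
      have halphaS : Continuous (fun ξ : EuclideanSpace ℝ (Fin p) => alphaS q Δ lam ξ) := by
        have hn : Continuous fun ξ : EuclideanSpace ℝ (Fin p) => ‖ξ - q‖ :=
          (continuous_id.sub continuous_const).norm
        exact continuous_const.max
          (((hn.sub (continuous_const.mul hsigma)).div_const _).min continuous_const)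
      have halphaA : Continuous (fun ξ : EuclideanSpace ℝ (Fin p) => alphaA q Δ lam ξ) :=
        hsigma.mul (continuous_const.sub halphaS)
      have hnus0 : ContinuousAt (fun ξ : EuclideanSpace ℝ (Fin p) => nuS c ξ) 0 := continuousAt_nuS_zero hc
      have hnua0 : ContinuousAt (fun ξ : EuclideanSpace ℝ (Fin p) => nuA c q ξ) 0 := by
        have hsub : Continuous fun ξ : EuclideanSpace ℝ (Fin p) => ξ - q := continuous_id.sub continuous_const
        have hin : ContinuousAt (fun ξ : EuclideanSpace ℝ (Fin p) => ⟪ξ - q, nuS c ξ⟫) 0 :=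
          hsub.continuousAt.inner hnus0
        have hden : Continuous (fun ξ : EuclideanSpace ℝ (Fin p) => ‖ξ - q‖ ^ 2) := hsub.norm.pow 2
        have hdenne : ‖(0:EuclideanSpace ℝ (Fin p)) - q‖ ^ 2 ≠ 0 := by
          apply pow_ne_zero
          rw [norm_ne_zero_iff, zero_sub, neg_ne_zero]
          exact hq0
        have h : ContinuousAt
            (fun ξ : EuclideanSpace ℝ (Fin p) => nuS c ξ - (⟪ξ - q, nuS c ξ⟫ / ‖ξ - q‖ ^ 2) • (ξ - q)) 0 :=
          hnus0.sub (((hin.div hden.continuousAt hdenne)).smul hsub.continuousAt)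
        exact h
      have hmu : ContinuousAt (fun ξ : EuclideanSpace ℝ (Fin p) => mu c q Δ lam ξ) 0 := by
        show ContinuousAt
          (fun ξ : EuclideanSpace ℝ (Fin p) => alphaS q Δ lam ξ • nuS c ξ + alphaA q Δ lam ξ • nuA c q ξ) 0
        exact (halphaS.continuousAt.smul hnus0).add (halphaA.continuousAt.smul hnua0)
      exact hmu.continuousWithinAt
    · exact ((lipAt_mu hc q Δ lam hxq hx0).continuousAt).continuousWithinAt
  · intro ξ hq h0
    exact lipAt_mu hc q Δ lam hq h0

end Application
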